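/- Let R be a relation on a finite set X with eventual period q, X_R its set of recurrent points, and R̄ = R^(q+1). Then for all n ≥ 1, the restriction (R̄^n) ∩ (X_R × X_R) equals (R̄ ∩ (X_R × X_R))^n. -/

import Mathlib

open Set Pointwise

variable {X : Type*}

def relComp (S R : Set (X × X)) : Set (X × X) :=
  {p | ∃ y, (p.1, y) ∈ R ∧ (y, p.2) ∈ S}

def relPow (R : Set (X × X)) : ℕ → Set (X × X)
  | 0 => {p | p.1 = p.2}
  | n + 1 => relComp R (relPow R n)

def relPer (R : Set (X × X)) : Set ℕ :=
  {q | 0 < q ∧ ∃ N, ∀ n ≥ N, relPow R (q + n) = relPow R n}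

def relRecurrent (R : Set (X × X)) (x : X) : Prop :=
  ∃ n, 1 ≤ n ∧ (x, x) ∈ relPow R n

lemma mem_relPow_add (R : Set (X × X)) (a b : ℕ) (x z : X) :
    (x, z) ∈ relPow R (a + b) ↔ ∃ y, (x, y) ∈ relPow R a ∧ (y, z) ∈ relPow R b := by
  induction b generalizing z with
  | zero =>
    simp only [Nat.add_zero]
    constructor
    · intro h; exact ⟨z, h, rfl⟩
    · rintro ⟨y, hy, (h : y = z)⟩; exact h ▸ hy
  | succ b ih =>
    constructor
    · rintro ⟨w, hw, hR⟩
      obtain ⟨y, hy1, hy2⟩ := (ih w).mp hw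
      exact ⟨y, hy1, ⟨w, hy2, hR⟩⟩
    · rintro ⟨y, hy1, w, hw1, hw2⟩
      exact ⟨w, (ih w).mpr ⟨y, hy1, hw1⟩, hw2⟩

lemma relPow_relPow (R : Set (X × X)) (k n : ℕ) :
    relPow (relPow R k) n = relPow R (n * k) := by
  induction n with
  | zero => rw [Nat.zero_mul]; rfl
  | succ n ih =>
    ext ⟨x, z⟩
    show (∃ y, (x, y) ∈ relPow (relPow R k) n ∧ (y, z) ∈ relPow R k) ↔ _
    rw [ih, Nat.succ_mul, mem_relPow_add]

lemma relPow_one (R : Set (X × X)) : relPow R 1 = R := by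
  ext ⟨x, z⟩
  constructor
  · rintro ⟨y, (h : x = y), hy⟩; exact h ▸ hy
  · intro h; exact ⟨x, rfl, h⟩

section Stab

variable (R : Set (X × X)) (q : ℕ) (hev : relPow R (q + q) = relPow R q)

include hev

lemma relPow_stab : ∀ m, q ≤ m → relPow R (m + q) = relPow R m := by
  intro m hm
  obtain ⟨t, rfl⟩ := Nat.exists_eq_add_of_le hm
  have h1 : q + t + q = (q + q) + t := by omega
  rw [h1]
  ext ⟨x, z⟩
  rw [mem_relPow_add, hev, ← mem_relPow_add]

lemma relPow_mul_q : ∀ k, 1 ≤ k → relPow R (k * q) = relPow R q := by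
  intro k hk
  obtain ⟨j, rfl⟩ := Nat.exists_eq_add_of_le hk
  induction j with
  | zero => simp
  | succ j ih =>
    have h1 : (1 + (j + 1)) * q = (1 + j) * q + q := by ring
    rw [h1, relPow_stab R q hev _ (by nlinarith), ih (by omega)]

end Stab

lemma exists_path (E : Set (X × X)) : ∀ m (a b : X), (a, b) ∈ relPow E m →
    ∃ f : ℕ → X, f 0 = a ∧ f m = b ∧ ∀ i < m, (f i, f (i + 1)) ∈ E := by
  intro m
  induction m with
  | zero =>
    rintro a b (h : a = b)
    exact ⟨fun _ => a, rfl, h.symm ▸ rfl, fun i hi => absurd hi (Nat.not_lt_zero i)⟩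
  | succ m ih =>
    rintro a b ⟨y, hy, hyb⟩
    obtain ⟨f, hf0, hfm, hf⟩ := ih a y hy
    refine ⟨fun i => if i = m + 1 then b else f i, by simp [hf0], by simp, ?_⟩
    intro i hi
    rcases Nat.lt_or_ge i m with h | h
    · simpa [Nat.ne_of_lt (by omega : i < m + 1), Nat.ne_of_lt (by omega : i + 1 < m + 1), Nat.ne_of_lt h]
        using hf i h
    · have hieq : i = m := by omega
      subst hieq
      simpa [show ¬ i = i + 1 by omega, hfm] using hyb

lemma path_mem (E : Set (X × X)) (m : ℕ) (f : ℕ → X) (hf : ∀ i < m, (f i, f (i + 1)) ∈ E) :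
    ∀ d i, i + d ≤ m → (f i, f (i + d)) ∈ relPow E d := by
  intro d
  induction d with
  | zero => intro i _; exact rfl
  | succ d ih =>
    intro i hi
    exact ⟨f (i + d), ih i (by omega), hf (i + d) (by omega)⟩

lemma key_recurrent [Finite X] (R : Set (X × X)) (q : ℕ) (hq : 0 < q)
    (hev : relPow R (q + q) = relPow R q) (a b : X) (hab : (a, b) ∈ relPow R q) :
    ∃ c, (c, c) ∈ relPow R q ∧ (a, c) ∈ relPow R q ∧ (c, b) ∈ relPow R q := by
  have := Fintype.ofFinite X
  set N := Fintype.card X + 1 with hN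
  have hab' : (a, b) ∈ relPow (relPow R q) N := by
    rw [relPow_relPow, relPow_mul_q R q hev N (by omega)]
    exact hab
  obtain ⟨f, hf0, hfN, hf⟩ := exists_path _ N a b hab'
  obtain ⟨i, j, hij, hfij⟩ := Fintype.exists_ne_map_eq_of_card_lt
    (fun i : Fin N => f (i + 1)) (by simp [hN])
  have hne : (i : ℕ) ≠ (j : ℕ) := fun h => hij (Fin.ext h)
  wlog hlt : (i : ℕ) < (j : ℕ) generalizing i j
  · exact this j i hij.symm hfij.symm (fun h => hij (Fin.ext h.symm)) (by omega)
  set c := f ((i : ℕ) + 1) with hc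
  have hmem : ∀ u v : ℕ, u + v ≤ N → 1 ≤ v → (f u, f (u + v)) ∈ relPow R q := by
    intro u v huv hv
    have := path_mem _ N f hf v u huv
    rwa [relPow_relPow, relPow_mul_q R q hev v hv] at this
  have hcc : (c, c) ∈ relPow R q := by
    have := hmem ((i : ℕ) + 1) ((j : ℕ) - (i : ℕ)) (by omega) (by omega)
    rwa [show (i : ℕ) + 1 + ((j : ℕ) - (i : ℕ)) = (j : ℕ) + 1 by omega, ← hfij] at this
  have hac : (a, c) ∈ relPow R q := by
    have := hmem 0 ((i : ℕ) + 1) (by omega) (by omega)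
    rwa [hf0, Nat.zero_add] at this
  refine ⟨c, hcc, hac, ?_⟩
  rcases Nat.lt_or_ge ((j : ℕ) + 1) N with h | h
  · have := hmem ((j : ℕ) + 1) (N - ((j : ℕ) + 1)) (by omega) (by omega)
    rw [show (j : ℕ) + 1 + (N - ((j : ℕ) + 1)) = N by omega, hfN, ← hfij] at this
    exact this
  · have hjN : (j : ℕ) + 1 = N := by omega
    have : c = b := by rw [hfij, hjN, hfN]
    exact this ▸ hcc

theorem stmt13 [Finite X] (R : Set (X × X)) (q : ℕ) (hq : 0 < q)
    (hev : relPow R (q + q) = relPow R q) :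
    ∀ n, 1 ≤ n →
      relPow (relPow R (q + 1)) n ∩
          ({x | (x, x) ∈ relPow R q} ×ˢ {x | (x, x) ∈ relPow R q}) =
        relPow (relPow R (q + 1) ∩
          ({x | (x, x) ∈ relPow R q} ×ˢ {x | (x, x) ∈ relPow R q})) n := by
  set A : Set X := {x | (x, x) ∈ relPow R q} with hA
  set Rb : Set (X × X) := relPow R (q + 1) with hRb
  set S : Set (X × X) := Rb ∩ A ×ˢ A with hS
  -- key step lemma
  have step : ∀ n : ℕ, 1 ≤ n → ∀ x z : X, (x, z) ∈ relPow R ((n + 1) * (q + 1)) →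
      ∃ y ∈ A, (x, y) ∈ relPow R (n * (q + 1)) ∧ (y, z) ∈ relPow R (q + 1) := by
    intro n hn x z hxz
    rw [show (n + 1) * (q + 1) = n * (q + 1) + (q + 1) by ring, mem_relPow_add] at hxz
    obtain ⟨w, hxw, hwz⟩ := hxz
    have hwz' : (w, z) ∈ relPow R (q + (q + 1)) := by
      rw [show q + (q + 1) = (q + 1) + q by ring, relPow_stab R q hev (q + 1) (by omega)]
      exact hwz
    rw [mem_relPow_add] at hwz'
    obtain ⟨v, hwv, hvz⟩ := hwz'
    obtain ⟨c, hcc, hwc, hcv⟩ := key_recurrent R q hq hev w v hwv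
    refine ⟨c, hcc, ?_, ?_⟩
    · have : (x, c) ∈ relPow R (n * (q + 1) + q) := (mem_relPow_add _ _ _ _ _).mpr ⟨w, hxw, hwc⟩
      rwa [relPow_stab R q hev (n * (q + 1)) (by nlinarith)] at this
    · have : (c, z) ∈ relPow R (q + (q + 1)) := (mem_relPow_add _ _ _ _ _).mpr ⟨v, hcv, hvz⟩
      rwa [show q + (q + 1) = (q + 1) + q by ring,
        relPow_stab R q hev (q + 1) (by omega)] at this
  -- forward inclusion
  have fwd : ∀ n : ℕ, ∀ x z : X, (x, z) ∈ relPow Rb (n + 1) → x ∈ A → z ∈ A →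
      (x, z) ∈ relPow S (n + 1) := by
    intro n
    induction n with
    | zero =>
      intro x z hxz hx hz
      rw [relPow_one] at hxz ⊢
      exact ⟨hxz, hx, hz⟩
    | succ n ih =>
      intro x z hxz hx hz
      rw [hRb, relPow_relPow] at hxz
      obtain ⟨y, hy, hxy, hyz⟩ := step (n + 1) (by omega) x z hxz
      have hxy' : (x, y) ∈ relPow Rb (n + 1) := by
        rw [hRb, relPow_relPow]; exact hxy
      exact ⟨y, ih x y hxy' hx hy, ⟨hyz, hy, hz⟩⟩
  -- backward inclusion
  have bwd : ∀ n : ℕ, ∀ x z : X, (x, z) ∈ relPow S (n + 1) →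
      (x, z) ∈ relPow Rb (n + 1) ∧ x ∈ A ∧ z ∈ A := by
    intro n
    induction n with
    | zero =>
      intro x z hxz
      rw [relPow_one] at hxz ⊢
      exact ⟨hxz.1, hxz.2.1, hxz.2.2⟩
    | succ n ih =>
      rintro x z ⟨y, hxy, hyz⟩
      obtain ⟨h1, hx, hy⟩ := ih x y hxy
      exact ⟨⟨y, h1, hyz.1⟩, hx, hyz.2.2⟩
  rintro n hn
  obtain ⟨m, rfl⟩ : ∃ m, n = m + 1 := ⟨n - 1, by omega⟩
  ext ⟨x, z⟩
  constructor
  · rintro ⟨hxz, hx, hz⟩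
    exact fwd m x z hxz hx hz
  · intro h
    obtain ⟨h1, hx, hz⟩ := bwd m x z h
    exact ⟨h1, hx, hz⟩
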